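/- Let m ≥ 5 be odd, h = (m-1)/2, n = q^m - 1, and a = a_{h+1} q^{h+1} + a_0 with 1 ≤ a_0, a_{h+1} ≤ q-1. Then a is not the coset leader of its q-cyclotomic coset modulo n; in fact a_0 q^h + a_{h+1} lies in C_a and is smaller than a. -/

import Mathlib

/-- The q-cyclotomic coset of a modulo n: {a * q^j mod n : j ≥ 0}. -/
def cyclCoset (q n a : ℕ) : Finset ℕ :=
  (Finset.range n).image (fun j => a * q ^ j % n)

/-- a is the coset leader (smallest element) of its q-cyclotomic coset modulo n. -/
def IsCosetLeader (q n a : ℕ) : Prop :=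
  ∀ j : ℕ, a ≤ a * q ^ j % n

theorem stmt_6 (q m : ℕ) (hq : IsPrimePow q) (hm : Odd m) (hm5 : 5 ≤ m)
    (a ah1 a0 : ℕ)
    (hbh : 1 ≤ ah1) (hbh' : ah1 ≤ q - 1)
    (hb0 : 1 ≤ a0) (hb0' : a0 ≤ q - 1)
    (hd : a = ah1 * q ^ ((m - 1) / 2 + 1) + a0) :
    ¬ IsCosetLeader q (q ^ m - 1) a ∧
    a0 * q ^ ((m - 1) / 2) + ah1 ∈ cyclCoset q (q ^ m - 1) a ∧
    a0 * q ^ ((m - 1) / 2) + ah1 < a := by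
  have hq2 : 2 ≤ q := hq.two_le
  set h : ℕ := (m - 1) / 2 with hh
  obtain ⟨k, hk⟩ := hm
  have hhk : h = k := by omega
  have hhm : 2 * h + 1 = m := by omega
  have hh2 : 2 ≤ h := by omega
  set b : ℕ := a0 * q ^ h + ah1 with hbdef
  -- basic power facts
  have hqh : q ≤ q ^ h := Nat.le_self_pow (by omega) q
  have hqm_split : q ^ m = q ^ (h + 1) * q ^ h := by
    rw [← pow_add]; congr 1; omega
  have hb_lt : b < q ^ (h + 1) := by
    have h1 : a0 * q ^ h ≤ (q - 1) * q ^ h := Nat.mul_le_mul_right _ hb0'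
    have h2 : q ^ (h + 1) = q * q ^ h := by ring
    have hqhpos : 1 ≤ q ^ h := Nat.one_le_pow _ _ (by omega)
    have : (q - 1) * q ^ h + (q - 1) < q * q ^ h := by
      have heq : (q - 1) * q ^ h + q ^ h = q * q ^ h := by
        rw [← Nat.succ_mul, Nat.succ_eq_add_one, Nat.sub_add_cancel (by omega)]
      omega
    omega
  have hhm1 : h + 1 ≤ m - 1 := by omega
  have hle : q ^ (h + 1) ≤ q ^ (m - 1) := Nat.pow_le_pow_right (by omega) hhm1
  have hqm1 : q ^ m = q ^ (m - 1) * q := by rw [← pow_succ]; congr 1; omega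
  have hqm1pos : 2 ≤ q ^ (m - 1) := le_trans hq2 (Nat.le_self_pow (by omega) q)
  have hn_big : q ^ (h + 1) < q ^ m - 1 := by
    have : q ^ (m - 1) * 2 ≤ q ^ (m - 1) * q := Nat.mul_le_mul_left _ hq2
    omega
  have hb_lt_n : b < q ^ m - 1 := lt_trans hb_lt hn_big
  -- a ≥ q^(h+1) + 1
  have ha_ge : q ^ (h + 1) + 1 ≤ a := by
    have : 1 * q ^ (h + 1) ≤ ah1 * q ^ (h + 1) := Nat.mul_le_mul_right _ hbh
    omega
  have hb_lt_a : b < a := lt_of_lt_of_le hb_lt (by omega)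
  -- key congruence : a * q^h = ah1 * (q^m - 1) + b
  have hN1 : 1 ≤ q ^ m := Nat.one_le_pow _ _ (by omega)
  have key : a * q ^ h = ah1 * (q ^ m - 1) + b := by
    have h1 : a * q ^ h = ah1 * q ^ m + a0 * q ^ h := by
      rw [hd, hqm_split]; ring
    have h2 : ah1 * (q ^ m - 1) + ah1 = ah1 * q ^ m := by
      rw [← Nat.mul_succ]
      congr 1
      omega
    omega
  have hmod : a * q ^ h % (q ^ m - 1) = b := by
    rw [key, add_comm, Nat.add_mul_mod_self_right, Nat.mod_eq_of_lt hb_lt_n]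
  refine ⟨?_, ?_, hb_lt_a⟩
  · intro hlead
    have := hlead h
    rw [hmod] at this
    omega
  · simp only [cyclCoset, Finset.mem_image, Finset.mem_range]
    refine ⟨h, ?_, hmod⟩
    have hm2 : m < 2 ^ m := Nat.lt_two_pow_self (n := m)
    have : 2 ^ m ≤ q ^ m := Nat.pow_le_pow_left hq2 m
    omega
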